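/- Let X = ℝ^d with a probability distribution P having a positive density with respect to Lebesgue measure. Let F = T_∞ be the class of axis-parallel decision trees of arbitrary finite depth with values in [−1,1]. Fix f ∈ T_∞, x_0 ∈ ℝ^d, and an anchor explanation (R, p) with x_0 ∈ X_R, P(X_R) > 0 (positive coverage), and precision p = prec(R, f, x_0) = 1 (a perfect anchor). Then for every n ∈ ℕ the anchor explanation is informative: R_n(F_explain) < R_n(F_predict). -/

import Mathlib

open MeasureTheory
open scoped ENNReal
open Metric Filter
open scoped Topology

/-- The distribution of one sample: a point drawn from `μ` together with an independent
Rademacher sign (uniform on `{-1, +1}`), taken as an `n`-fold product. -/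
noncomputable def sampleMeasure {α : Type*} [MeasurableSpace α] (μ : Measure α) (n : ℕ) :
    Measure (Fin n → α × ℝ) :=
  Measure.pi fun _ =>
    μ.prod ((2 : ℝ≥0∞)⁻¹ • Measure.dirac (-1 : ℝ) + (2 : ℝ≥0∞)⁻¹ • Measure.dirac (1 : ℝ))

/-- Rademacher complexity `R_n(F) = E_{x,σ} sup_{g ∈ F} (1/n) ∑ σ_i g(x_i)`. -/
noncomputable def rademacher {α : Type*} [MeasurableSpace α] (μ : Measure α) (n : ℕ)
    (F : Set (α → ℝ)) : ℝ :=
  ∫ ω, sSup ((fun g => (n : ℝ)⁻¹ * ∑ i, (ω i).2 * g (ω i).1) '' F) ∂(sampleMeasure μ n)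

/-- Axis-parallel decision trees of depth at most `K`, defined inductively: a tree of
depth `0` is a constant function; a tree of depth at most `K+1` is either a tree of depth
at most `K`, or a threshold split on some coordinate between two trees of depth at most `K`. -/
def IsTree {d : ℕ} : ℕ → ((Fin d → ℝ) → ℝ) → Prop
  | 0, g => ∃ c : ℝ, g = fun _ => c
  | K + 1, g => IsTree K g ∨
      ∃ (j : Fin d) (t : ℝ) (g₁ g₂ : (Fin d → ℝ) → ℝ), IsTree K g₁ ∧ IsTree K g₂ ∧
        g = fun x => if x j ≤ t then g₁ x else g₂ x

/-- The precision of the box `XR` for the scoring function `g` at `x₀`: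
the conditional probability under `μ` that a point of `XR` receives the same
classification label `sign (g x)` as `x₀`. -/
noncomputable def precision {d : ℕ} (μ : Measure (Fin d → ℝ)) (XR : Set (Fin d → ℝ))
    (g : (Fin d → ℝ) → ℝ) (x₀ : Fin d → ℝ) : ℝ :=
  (μ {x | x ∈ XR ∧ Real.sign (g x) = Real.sign (g x₀)}).toReal / (μ XR).toReal



theorem isTree_mono {d K K' : ℕ} {g : (Fin d → ℝ) → ℝ} (h : IsTree K g) (hK : K ≤ K') :
    IsTree K' g := by
  induction K' with
  | zero => simpa [Nat.le_zero.mp hK] using h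
  | succ m ih =>
    rcases Nat.lt_or_ge K (m+1) with h1 | h1
    · exact Or.inl (ih (Nat.lt_succ_iff.mp h1))
    · have : K = m + 1 := le_antisymm hK h1
      subst this; exact h

theorem isTree_measurable {d : ℕ} : ∀ (K : ℕ) (g : (Fin d → ℝ) → ℝ), IsTree K g → Measurable g := by
  intro K
  induction K with
  | zero => rintro g ⟨c, rfl⟩; exact measurable_const
  | succ m ih =>
    rintro g (h | ⟨j, t, g₁, g₂, h₁, h₂, rfl⟩)
    · exact ih g h
    · exact Measurable.ite (measurableSet_le (measurable_pi_apply j) measurable_const)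
        (ih g₁ h₁) (ih g₂ h₂)

/-- trees can interpolate arbitrary values on a finite set of points. -/
theorem isTree_interpolate {d : ℕ} (s : Finset (Fin d → ℝ)) (v : (Fin d → ℝ) → ℝ) :
    ∃ (K : ℕ) (g : (Fin d → ℝ) → ℝ), IsTree K g ∧ (∀ x ∈ s, g x = v x) ∧
      (∀ x, g x = 0 ∨ ∃ y ∈ s, g x = v y) := by
  induction s using Finset.strongInduction with
  | _ s ih =>
    rcases eq_or_ne s ∅ with rfl | hne
    · exact ⟨0, fun _ => 0, ⟨0, rfl⟩, by simp, fun x => Or.inl rfl⟩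
    obtain ⟨a, ha⟩ := Finset.nonempty_iff_ne_empty.mpr hne
    by_cases hsing : ∀ b ∈ s, b = a
    · refine ⟨0, fun _ => v a, ⟨v a, rfl⟩, fun x hx => by rw [hsing x hx], fun x => Or.inr ⟨a, ha, rfl⟩⟩
    push_neg at hsing
    obtain ⟨b, hb, hba⟩ := hsing
    obtain ⟨j, hj⟩ : ∃ j, b j ≠ a j := by
      by_contra h; push_neg at h; exact hba (funext h)
    set t : ℝ := min (a j) (b j) with ht
    set s₁ := s.filter (fun x => x j ≤ t) with hs₁
    set s₂ := s.filter (fun x => ¬ x j ≤ t) with hs₂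
    have hlt : t < max (a j) (b j) := by
      rcases lt_or_gt_of_ne hj with h | h
      · simp [ht, max_eq_right h.le, min_eq_right h.le, h]
      · simp [ht, max_eq_left h.le, min_eq_left h.le, h]
    have hmem1 : ∃ x ∈ s, x j ≤ t := by
      rcases le_total (a j) (b j) with h | h
      · exact ⟨a, ha, by simp [ht, min_eq_left h]⟩
      · exact ⟨b, hb, by simp [ht, min_eq_right h]⟩
    have hmem2 : ∃ x ∈ s, ¬ x j ≤ t := by
      rcases lt_or_gt_of_ne hj with h | h
      · exact ⟨a, ha, by simp only [ht, min_eq_right h.le, not_le]; exact h⟩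
      · exact ⟨b, hb, by simp only [ht, min_eq_left h.le, not_le]; exact h⟩
    obtain ⟨c₁, hc₁s, hc₁⟩ := hmem1
    obtain ⟨c₂, hc₂s, hc₂⟩ := hmem2
    have hss₁ : s₁ ⊂ s := by
      refine Finset.ssubset_iff_of_subset (Finset.filter_subset _ _) |>.mpr ⟨c₂, hc₂s, ?_⟩
      simp [hs₁, hc₂]
    have hss₂ : s₂ ⊂ s := by
      refine Finset.ssubset_iff_of_subset (Finset.filter_subset _ _) |>.mpr ⟨c₁, hc₁s, ?_⟩
      simp [hs₂, hc₁]
    obtain ⟨K₁, g₁, hT₁, hv₁, hr₁⟩ := ih s₁ hss₁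
    obtain ⟨K₂, g₂, hT₂, hv₂, hr₂⟩ := ih s₂ hss₂
    refine ⟨(max K₁ K₂) + 1, fun x => if x j ≤ t then g₁ x else g₂ x,
      Or.inr ⟨j, t, g₁, g₂, isTree_mono hT₁ (le_max_left _ _), isTree_mono hT₂ (le_max_right _ _), rfl⟩,
      ?_, ?_⟩
    · intro x hx
      by_cases hxt : x j ≤ t
      · simp only [hxt, if_true]
        exact hv₁ x (by simp [hs₁, hx, hxt])
      · simp only [hxt, if_false]
        exact hv₂ x (by simp only [hs₂, Finset.mem_filter]; exact ⟨hx, hxt⟩)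
    · intro x
      by_cases hxt : x j ≤ t
      · simp only [hxt, if_true]
        rcases hr₁ x with h | ⟨y, hy, hgy⟩
        · exact Or.inl h
        · exact Or.inr ⟨y, Finset.mem_of_mem_filter y hy, hgy⟩
      · simp only [hxt, if_false]
        rcases hr₂ x with h | ⟨y, hy, hgy⟩
        · exact Or.inl h
        · exact Or.inr ⟨y, Finset.mem_of_mem_filter y hy, hgy⟩

/-- a tree is constant on a small left-anchored box at every point. -/
theorem isTree_local {d : ℕ} : ∀ (K : ℕ) (g : (Fin d → ℝ) → ℝ), IsTree K g →
    ∀ (x : Fin d → ℝ) (ε : ℝ), 0 < ε → ∃ δ, 0 < δ ∧ δ ≤ ε ∧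
      ∀ y, (∀ j, x j - δ < y j ∧ y j ≤ x j) → g y = g x := by
  intro K
  induction K with
  | zero => rintro g ⟨c, rfl⟩ x ε hε; exact ⟨ε, hε, le_rfl, fun _ _ => rfl⟩
  | succ m ih =>
    rintro g (h | ⟨j, t, g₁, g₂, h₁, h₂, rfl⟩) x ε hε
    · exact ih g h x ε hε
    by_cases hx : x j ≤ t
    · obtain ⟨δ, hδ0, hδε, hδ⟩ := ih g₁ h₁ x ε hε
      refine ⟨δ, hδ0, hδε, fun y hy => ?_⟩
      have hyj : y j ≤ t := le_trans (hy j).2 hx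
      simp only [hyj, hx, if_true]
      exact hδ y hy
    · push_neg at hx
      obtain ⟨δ, hδ0, hδε, hδ⟩ := ih g₂ h₂ x (min ε (x j - t)) (lt_min hε (by linarith))
      refine ⟨δ, hδ0, hδε.trans (min_le_left _ _), fun y hy => ?_⟩
      have hyj : ¬ y j ≤ t := by
        have := (hy j).1
        have : x j - δ < y j := this
        have hδ' : δ ≤ x j - t := hδε.trans (min_le_right _ _)
        push_neg; linarith
      simp only [hyj, if_false, not_le.mpr hx, if_neg (not_le.mpr hx)]
      exact hδ y hy

theorem pi_eval_null {n : ℕ} {β : Type*} [MeasurableSpace β] (κ : Fin n → Measure β)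
    [∀ i, SigmaFinite (κ i)] (i : Fin n) (B : Set β) (hB : κ i B = 0) :
    Measure.pi κ {ω | ω i ∈ B} = 0 := by
  have hB' : κ i (toMeasurable (κ i) B) = 0 := by rwa [measure_toMeasurable]
  have hsub : {ω : Fin n → β | ω i ∈ B} ⊆
      Set.pi Set.univ (Function.update (fun _ => Set.univ) i (toMeasurable (κ i) B)) := by
    intro ω hω j _
    rcases eq_or_ne j i with rfl | hj
    · simpa using subset_toMeasurable (κ j) B hω
    · simp [Function.update_of_ne hj]
  refine measure_mono_null hsub ?_
  rw [Measure.pi_pi]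
  refine Finset.prod_eq_zero (Finset.mem_univ i) ?_
  simp [hB']

theorem pi_pair_null {n : ℕ} {β α : Type*} [MeasurableSpace β] [MeasurableSpace α]
    [AddGroup α] [MeasurableSub₂ α] [MeasurableSingletonClass α]
    (κ : Measure β) [IsProbabilityMeasure κ] (f : β → α) (hf : Measurable f)
    (hfib : ∀ a, κ {b | f b = a} = 0)
    {i j : Fin n} (hij : i ≠ j) :
    Measure.pi (fun _ : Fin n => κ) {ω | f (ω i) = f (ω j)} = 0 := by
  cases n with
  | zero => exact absurd (Subsingleton.elim i j) hij
  | succ m =>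
  obtain ⟨k, hk⟩ := Fin.exists_succAbove_eq (Ne.symm hij)
  set e := MeasurableEquiv.piFinSuccAbove (fun _ : Fin (m+1) => β) i with he
  have mp := measurePreserving_piFinSuccAbove (fun _ : Fin (m+1) => κ) i
  set E : Set (β × (Fin m → β)) := {p | f p.1 = f (p.2 k)} with hE
  have hEm : MeasurableSet E :=
    measurableSet_eq_fun (hf.comp measurable_fst)
      (hf.comp ((measurable_pi_apply k).comp measurable_snd))
  have hpre : {ω : Fin (m+1) → β | f (ω i) = f (ω j)} = e ⁻¹' E := by
    ext ω
    simp only [Set.mem_setOf_eq, Set.mem_preimage, hE, he,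
      MeasurableEquiv.piFinSuccAbove_apply, Fin.insertNthEquiv_symm_apply]
    rw [show (Fin.removeNth i ω) k = ω (i.succAbove k) from rfl, hk]
  rw [hpre, mp.measure_preimage hEm.nullMeasurableSet]
  rw [Measure.prod_apply hEm]
  have : ∀ b : β, (Measure.pi fun _ : Fin m => κ) (Prod.mk b ⁻¹' E) = 0 := by
    intro b
    have : Prod.mk b ⁻¹' E = {w : Fin m → β | w k ∈ {c | f c = f b}} := by
      ext w; simp [hE, eq_comm]
    rw [this]
    exact pi_eval_null _ k _ (hfib (f b))
  simp only [this, lintegral_const, zero_mul, mul_zero]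

theorem exists_thick_good {d : ℕ} (μ : Measure (Fin d → ℝ)) [IsProbabilityMeasure μ]
    (hac : μ ≪ volume) :
    ∃ G : Set (Fin d → ℝ), μ Gᶜ = 0 ∧ ∀ x ∈ G, ∃ ε₀ > 0, ∀ δ : ℝ, 0 < δ → δ ≤ ε₀ →
      0 < μ {y | ∀ j, x j - δ < y j ∧ y j ≤ x j} := by
  set h : (Fin d → ℝ) → ℝ≥0∞ := μ.rnDeriv volume with hh
  have hmeas : Measurable h := Measure.measurable_rnDeriv _ _
  have hμ : volume.withDensity h = μ := Measure.withDensity_rnDeriv_eq μ volume hac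
  set A : Set (Fin d → ℝ) := {x | h x ≠ 0} with hA
  have hAm : MeasurableSet A := (hmeas (measurableSet_singleton 0)).compl
  have hdens := Besicovitch.ae_tendsto_measure_inter_div_of_measurableSet
    (volume : Measure (Fin d → ℝ)) hAm
  set T : Set (Fin d → ℝ) := {x | Tendsto
      (fun r => volume (A ∩ closedBall x r) / volume (closedBall x r)) (𝓝[>] 0) (𝓝 1)} with hT
  refine ⟨A ∩ T, ?_, ?_⟩
  · have h1 : μ Aᶜ = 0 := by
      rw [← hμ, withDensity_apply _ hAm.compl]
      rw [setLIntegral_congr_fun hAm.compl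
        ((fun x hx => by simpa [hA] using hx) :
          Set.EqOn h (fun _ => 0) Aᶜ)]
      simp
    have h2 : volume (A ∩ Tᶜ) = 0 := by
      refine measure_mono_null ?_ hdens
      intro x hx
      simp only [Set.mem_inter_iff, Set.mem_compl_iff, hT, Set.mem_setOf_eq] at hx
      intro hx'
      apply hx.2
      have hind : A.indicator (1 : (Fin d → ℝ) → ℝ≥0∞) x = 1 :=
        Set.indicator_of_mem hx.1 1
      simp only [Set.mem_setOf_eq] at hx'
      rwa [hind] at hx'
    have hsub : (A ∩ T)ᶜ ⊆ Aᶜ ∪ (A ∩ Tᶜ) := by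
      intro x hx
      by_cases hxA : x ∈ A
      · right; exact ⟨hxA, fun hxT => hx ⟨hxA, hxT⟩⟩
      · left; exact hxA
    exact measure_mono_null hsub (measure_union_null h1 (hac h2))
  · rintro x ⟨hxA, hxT⟩
    simp only [hT, Set.mem_setOf_eq] at hxT
    set c : ℝ≥0∞ := 2⁻¹ ^ (d+1) with hc
    have hc0 : c ≠ 0 := pow_ne_zero _ (ENNReal.inv_ne_zero.mpr ENNReal.ofNat_ne_top)
    have hc1 : c ≤ 1 := pow_le_one' (ENNReal.inv_le_one.mpr one_le_two) _
    have hlt : (1 : ℝ≥0∞) - c < 1 := ENNReal.sub_lt_self ENNReal.one_ne_top one_ne_zero hc0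
    have hev : ∀ᶠ r in 𝓝[>] (0:ℝ),
        1 - c < volume (A ∩ closedBall x r) / volume (closedBall x r) :=
      hxT.eventually (eventually_gt_nhds hlt)
    obtain ⟨ε₀, hε₀, hsubs⟩ := mem_nhdsGT_iff_exists_Ioc_subset.mp hev
    refine ⟨ε₀, hε₀, ?_⟩
    intro δ hδ0 hδε
    have hratio : 1 - c <
        volume (A ∩ closedBall x δ) / volume (closedBall x δ) := hsubs ⟨hδ0, hδε⟩
    set box : Set (Fin d → ℝ) := Set.pi Set.univ fun j => Set.Ioc (x j - δ) (x j) with hbox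
    have hboxeq : {y : Fin d → ℝ | ∀ j, x j - δ < y j ∧ y j ≤ x j} = box := by
      ext y; simp [hbox, Set.mem_pi]
    have hboxm : MeasurableSet box := MeasurableSet.univ_pi fun j => measurableSet_Ioc
    set B : ℝ≥0∞ := ENNReal.ofReal δ ^ d with hB
    have hboxvol : volume box = B := by
      rw [hbox, volume_pi_pi]
      simp only [Real.volume_Ioc, sub_sub_cancel]
      rw [Finset.prod_const, Finset.card_univ, Fintype.card_fin]
    have hB0 : B ≠ 0 := pow_ne_zero _ (by simpa using hδ0)
    have hBtop : B ≠ ∞ := ENNReal.pow_ne_top ENNReal.ofReal_ne_top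
    set V : ℝ≥0∞ := volume (closedBall x δ) with hV
    have hcbvol : V = 2 ^ d * B := by
      rw [hV, closedBall_pi x hδ0.le, volume_pi_pi]
      have : ∀ j : Fin d, volume (closedBall (x j) δ) = 2 * ENNReal.ofReal δ := by
        intro j
        rw [Real.closedBall_eq_Icc, Real.volume_Icc]
        rw [show x j + δ - (x j - δ) = 2 * δ by ring, ENNReal.ofReal_mul (by norm_num)]
        norm_num
      simp only [this]
      rw [Finset.prod_const, Finset.card_univ, Fintype.card_fin, mul_pow, hB]
    have hV0 : V ≠ 0 := by
      rw [hcbvol]; exact mul_ne_zero (by positivity) hB0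
    have hVtop : V ≠ ∞ := by
      rw [hcbvol]
      exact ENNReal.mul_ne_top (ENNReal.pow_ne_top ENNReal.ofNat_ne_top) hBtop
    have h1 : (1 - c) * V < volume (A ∩ closedBall x δ) :=
      ENNReal.mul_lt_of_lt_div hratio
    have hdiff : volume (closedBall x δ \ A) ≤ c * V := by
      have heq : closedBall x δ \ A = closedBall x δ \ (A ∩ closedBall x δ) := by
        ext y; simp only [Set.mem_diff, Set.mem_inter_iff]; tauto
      have hmd : volume (closedBall x δ \ (A ∩ closedBall x δ))
          = V - volume (A ∩ closedBall x δ) :=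
        measure_diff Set.inter_subset_right (hAm.inter measurableSet_closedBall).nullMeasurableSet
          (ne_top_of_le_ne_top hVtop (measure_mono Set.inter_subset_right))
      rw [heq, hmd]
      have hle : V - volume (A ∩ closedBall x δ) ≤ V - (1 - c) * V :=
        tsub_le_tsub_left h1.le _
      have hsplit : V = (1 - c) * V + c * V := by
        rw [← add_mul, tsub_add_cancel_of_le hc1, one_mul]
      have hfin : (1 - c) * V ≠ ∞ :=
        ENNReal.mul_ne_top (by simp [ENNReal.sub_ne_top ENNReal.one_ne_top]) hVtop
      have heq2 : V - (1 - c) * V = c * V := by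
        nth_rewrite 1 [hsplit]
        exact ENNReal.add_sub_cancel_left hfin
      exact hle.trans_eq heq2
    have hcV : c * V = 2⁻¹ * B := by
      rw [hcbvol, hc]
      have h2d : (2⁻¹ : ℝ≥0∞) ^ d * 2 ^ d = 1 := by
        rw [← mul_pow, ENNReal.inv_mul_cancel two_ne_zero ENNReal.ofNat_ne_top, one_pow]
      calc (2⁻¹:ℝ≥0∞) ^ (d+1) * (2 ^ d * B) = ((2⁻¹:ℝ≥0∞) ^ d * 2 ^ d) * (2⁻¹ * B) := by ring
        _ = 2⁻¹ * B := by rw [h2d, one_mul]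
    have hhalf : 2⁻¹ * B < B := by
      have := ENNReal.half_lt_self hB0 hBtop
      rwa [ENNReal.div_eq_inv_mul] at this
    have hdiff' : volume (closedBall x δ \ A) < B := lt_of_le_of_lt (hdiff.trans_eq hcV) hhalf
    have hboxcb : box ⊆ closedBall x δ := by
      intro y hy
      rw [mem_closedBall, dist_pi_le_iff hδ0.le]
      intro j
      have := hy j (Set.mem_univ j)
      rw [Real.dist_eq, abs_le]
      constructor <;> [skip; skip] <;>
        simp only [Set.mem_Ioc] at this <;> [linarith [this.1, this.2]; linarith [this.1, this.2]]
    have hpos : 0 < volume (box ∩ A) := by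
      by_contra hcon
      push_neg at hcon
      have h0 : volume (box ∩ A) = 0 := le_antisymm hcon zero_le
      have hle2 : volume box ≤ volume (box ∩ A) + volume (box \ A) :=
        measure_le_inter_add_diff _ _ _
      have : B ≤ volume (closedBall x δ \ A) := by
        calc B = volume box := hboxvol.symm
          _ ≤ volume (box ∩ A) + volume (box \ A) := hle2
          _ = volume (box \ A) := by rw [h0, zero_add]
          _ ≤ volume (closedBall x δ \ A) :=
            measure_mono (Set.diff_subset_diff_left hboxcb)
      exact absurd this (not_le.mpr hdiff')
    rw [hboxeq]
    by_contra hcon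
    push_neg at hcon
    have hμ0 : μ box = 0 := le_antisymm hcon zero_le
    rw [← hμ, withDensity_apply _ hboxm] at hμ0
    have hae := (lintegral_eq_zero_iff hmeas).mp hμ0
    have hA0 : (volume.restrict box) A = 0 := by
      have h' := hae
      rw [Filter.EventuallyEq, ae_iff] at h'
      simpa [hA] using h'
    rw [Measure.restrict_apply hAm, Set.inter_comm] at hA0
    exact absurd hA0 (ne_of_gt hpos)

theorem measurable_realSign : Measurable Real.sign := by
  unfold Real.sign
  exact Measurable.ite (measurableSet_lt measurable_id measurable_const) measurable_const
    (Measurable.ite (measurableSet_lt measurable_const measurable_id) measurable_const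
      measurable_const)

theorem sign_forcing {d : ℕ} (μ : Measure (Fin d → ℝ)) [IsProbabilityMeasure μ]
    (XR : Set (Fin d → ℝ)) (hXRm : MeasurableSet XR) (hcov : 0 < μ XR)
    (U : Set (Fin d → ℝ)) (hU : IsOpen U) (hUXR : U ⊆ XR)
    (G : Set (Fin d → ℝ)) (hG : ∀ x ∈ G, ∃ ε₀ > 0, ∀ δ : ℝ, 0 < δ → δ ≤ ε₀ →
      0 < μ {y | ∀ j, x j - δ < y j ∧ y j ≤ x j})
    (g : (Fin d → ℝ) → ℝ) (K : ℕ) (hg : IsTree K g) (x₀ : Fin d → ℝ)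
    (hprec : precision μ XR g x₀ = 1)
    (x : Fin d → ℝ) (hxU : x ∈ U) (hxG : x ∈ G) :
    Real.sign (g x) = Real.sign (g x₀) := by
  by_contra hne
  set S : Set (Fin d → ℝ) := {y | y ∈ XR ∧ Real.sign (g y) = Real.sign (g x₀)} with hS
  have hgm : Measurable g := isTree_measurable K g hg
  have hSm : MeasurableSet S := by
    have : S = XR ∩ (fun y => Real.sign (g y)) ⁻¹' {Real.sign (g x₀)} := by
      ext y; simp [hS, Set.mem_inter_iff]
    rw [this]
    exact hXRm.inter ((measurable_realSign.comp hgm) (measurableSet_singleton _))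
  have hXRne : (μ XR).toReal ≠ 0 :=
    ENNReal.toReal_ne_zero.mpr ⟨hcov.ne', measure_ne_top _ _⟩
  have hSXR : μ S = μ XR := by
    have h1 : (μ S).toReal = (μ XR).toReal := by
      have := hprec
      rw [precision] at this
      field_simp at this
      exact this
    exact (ENNReal.toReal_eq_toReal_iff' (measure_ne_top _ _) (measure_ne_top _ _)).mp h1
  have hSsub : S ⊆ XR := fun y hy => hy.1
  have hW : μ (XR \ S) = 0 := by
    rw [measure_diff hSsub hSm.nullMeasurableSet (measure_ne_top _ _), hSXR, tsub_self]
  obtain ⟨ε₀, hε₀, hthick⟩ := hG x hxG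
  obtain ⟨r, hr, hball⟩ := Metric.isOpen_iff.mp hU x hxU
  set ε : ℝ := min ε₀ (r/2) with hε
  have hεpos : 0 < ε := lt_min hε₀ (by linarith)
  obtain ⟨δ, hδ0, hδε, hδloc⟩ := isTree_local K g hg x ε hεpos
  set box : Set (Fin d → ℝ) := {y | ∀ j, x j - δ < y j ∧ y j ≤ x j} with hbox
  have hboxU : box ⊆ U := by
    intro y hy
    apply hball
    rw [Metric.mem_ball]
    have : dist y x ≤ δ := by
      rw [dist_pi_le_iff hδ0.le]
      intro j
      have := hy j
      rw [Real.dist_eq, abs_le]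
      constructor <;> linarith [(hy j).1, (hy j).2]
    have : dist y x ≤ r/2 := this.trans (hδε.trans (min_le_right _ _))
    linarith
  have hμbox : 0 < μ box := hthick δ hδ0 (hδε.trans (min_le_left _ _))
  have hboxW : box ⊆ XR \ S := by
    intro y hy
    refine ⟨hUXR (hboxU hy), ?_⟩
    intro hyS
    apply hne
    rw [← hδloc y hy]
    exact hyS.2
  exact absurd (measure_mono_null hboxW hW) hμbox.ne'


theorem pi_eval_measure {n : ℕ} {β : Type*} [MeasurableSpace β] (κ : Fin n → Measure β)
    [∀ i, IsProbabilityMeasure (κ i)] (i : Fin n) (B : Set β) :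
    Measure.pi κ {ω | ω i ∈ B} = κ i B := by
  have hset : {ω : Fin n → β | ω i ∈ B} =
      Set.pi Set.univ (Function.update (fun _ => Set.univ) i B) := by
    ext ω
    constructor
    · intro hω j _
      rcases eq_or_ne j i with rfl | hj
      · simpa using hω
      · simp [Function.update_of_ne hj]
    · intro hω
      have := hω i (Set.mem_univ i)
      simpa using this
  rw [hset, Measure.pi_pi]
  rw [Finset.prod_eq_single i (fun j _ hj => by simp [Function.update_of_ne hj])
    (fun hmem => absurd (Finset.mem_univ i) hmem)]
  simp


/-- **Perfect anchors (precision 1, positive coverage) on decision trees of arbitrary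
depth are informative** for every `n ≥ 1`. -/
theorem perfect_anchors_informative_on_unbounded_trees
    {d : ℕ} (hd : 0 < d)
    (μ : Measure (Fin d → ℝ)) [IsProbabilityMeasure μ]
    (ρ : (Fin d → ℝ) → ℝ≥0∞) (hdens : μ = volume.withDensity ρ) (hpos : ∀ x, 0 < ρ x)
    (F : Set ((Fin d → ℝ) → ℝ))
    (hF : F = {g | (∃ K, IsTree K g) ∧ ∀ x, g x ∈ Set.Icc (-1 : ℝ) 1})
    (f : (Fin d → ℝ) → ℝ) (hf : f ∈ F) (x₀ : Fin d → ℝ)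
    (I : Fin d → Set ℝ) (hI : ∀ j, (I j).OrdConnected)
    (XR : Set (Fin d → ℝ)) (hXR : XR = {x | ∀ j, x j ∈ I j})
    (hx₀ : x₀ ∈ XR) (hcov : 0 < μ XR)
    (hprec : precision μ XR f x₀ = 1)
    (n : ℕ) (hn : 1 ≤ n) :
    rademacher μ n {g ∈ F | g x₀ = f x₀ ∧ precision μ XR g x₀ = 1} <
      rademacher μ n {g ∈ F | g x₀ = f x₀} := by
  classical
  subst hF
  subst hXR
  -- notation
  set m : Measure ℝ := (2 : ℝ≥0∞)⁻¹ • Measure.dirac (-1 : ℝ) + (2 : ℝ≥0∞)⁻¹ • Measure.dirac (1 : ℝ)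
    with hm
  haveI hmprob : IsProbabilityMeasure m := by
    constructor
    simp only [hm, Measure.add_apply, Measure.smul_apply, smul_eq_mul, measure_univ, mul_one]
    exact ENNReal.inv_two_add_inv_two
  set ν : Measure (Fin n → (Fin d → ℝ) × ℝ) := sampleMeasure μ n with hν
  have hνpi : ν = Measure.pi (fun _ : Fin n => μ.prod m) := rfl
  have hac : μ ≪ (volume : Measure (Fin d → ℝ)) := by
    rw [hdens]; exact withDensity_absolutelyContinuous _ _
  haveI hνprob : IsProbabilityMeasure ν := by
    constructor
    rw [hνpi, show (Set.univ : Set (Fin n → (Fin d → ℝ) × ℝ))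
      = Set.pi Set.univ (fun _ => Set.univ) by simp, Measure.pi_pi]
    simp
  -- geometry
  set XR : Set (Fin d → ℝ) := {x | ∀ j, x j ∈ I j} with hXR
  have hXRm : MeasurableSet XR := by
    have : XR = Set.pi Set.univ I := by
      ext x; simp [hXR, Set.mem_pi]
    rw [this]
    exact MeasurableSet.univ_pi fun j => (hI j).measurableSet
  set U : Set (Fin d → ℝ) := {x | ∀ j, x j ∈ interior (I j)} with hU
  have hUXR : U ⊆ XR := fun x hx j => interior_subset (hx j)
  have hUopen : IsOpen U := by
    have : U = Set.pi Set.univ (fun j => interior (I j)) := by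
      ext x; simp [hU, Set.mem_pi]
    rw [this]
    exact isOpen_set_pi Set.finite_univ fun j _ => isOpen_interior
  have hXRU : μ (XR \ U) = 0 := by
    apply hac
    refine measure_mono_null (fun x hx => ?_)
      (measure_iUnion_null (s := fun j : Fin d => {x : Fin d → ℝ | x j ∈ frontier (I j)}) ?_)
    · obtain ⟨hx1, hx2⟩ := hx
      simp only [hU, Set.mem_setOf_eq, not_forall] at hx2
      obtain ⟨j, hj⟩ := hx2
      refine Set.mem_iUnion.mpr ⟨j, ?_⟩
      exact ⟨subset_closure (hx1 j), hj⟩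
    · intro j
      have hconv : Convex ℝ (I j) := convex_iff_ordConnected.mpr (hI j)
      have hfr : volume (frontier (I j)) = 0 := hconv.addHaar_frontier volume
      have := pi_eval_null (fun _ : Fin d => (volume : Measure ℝ)) j _ hfr
      rw [← volume_pi] at this
      exact this
  have hμU : 0 < μ U := by
    have : μ XR ≤ μ U + μ (XR \ U) :=
      (measure_mono (by intro x hx; by_cases h : x ∈ U; exacts [Set.mem_union_left _ h,
        Set.mem_union_right _ ⟨hx, h⟩])).trans (measure_union_le _ _)
    rw [hXRU, add_zero] at this
    exact lt_of_lt_of_le hcov this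
  obtain ⟨G, hGnull, hGthick⟩ := exists_thick_good μ hac
  have hx₀null : μ {x₀} = 0 := by
    apply hac
    have : ({x₀} : Set (Fin d → ℝ)) = Set.pi Set.univ (fun j => {x₀ j}) := by
      ext x; simp [funext_iff, Set.mem_pi]
    rw [this, volume_pi_pi]
    exact Finset.prod_eq_zero (Finset.mem_univ ⟨0, hd⟩) Real.volume_singleton
  -- the per-coordinate good set
  set P : Set (Fin d → ℝ) := {x | x ≠ x₀ ∧ (x ∈ XR → x ∈ U) ∧ x ∈ G} with hP
  have hPnull : μ Pᶜ = 0 := by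
    refine measure_mono_null (fun x hx => ?_)
      (measure_union_null (measure_union_null hx₀null hXRU) hGnull)
    simp only [hP, Set.mem_compl_iff, Set.mem_setOf_eq, not_and_or, not_forall, not_not] at hx
    rcases hx with hx | hx | hx
    · exact Set.mem_union_left _ (Set.mem_union_left _ hx)
    · obtain ⟨h1, h2⟩ := hx
      exact Set.mem_union_left _ (Set.mem_union_right _ ⟨h1, h2⟩)
    · exact Set.mem_union_right _ hx
  -- the good event
  set Good : Set (Fin n → (Fin d → ℝ) × ℝ) :=
    {ω | (∀ i, (ω i).1 ∈ P ∧ ((ω i).2 = -1 ∨ (ω i).2 = 1)) ∧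
      ∀ i j, i ≠ j → (ω i).1 ≠ (ω j).1} with hGood
  have hGoodnull : ν Goodᶜ = 0 := by
    have hBad0 : (μ.prod m) ((Pᶜ ×ˢ Set.univ) ∪ (Set.univ ×ˢ ({-1, 1} : Set ℝ)ᶜ)) = 0 := by
      refine measure_union_null ?_ ?_
      · rw [Measure.prod_prod, hPnull, zero_mul]
      · rw [Measure.prod_prod]
        have : m ({-1, 1} : Set ℝ)ᶜ = 0 := by
          simp only [hm, Measure.add_apply, Measure.smul_apply, smul_eq_mul]
          rw [Measure.dirac_apply, Measure.dirac_apply]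
          simp [Set.indicator]
        rw [this, mul_zero]
    refine measure_mono_null (fun ω hω => ?_) (measure_union_null
      (measure_iUnion_null (s := fun i : Fin n =>
        {ω : Fin n → (Fin d → ℝ) × ℝ | ω i ∈ (Pᶜ ×ˢ Set.univ) ∪ (Set.univ ×ˢ ({-1, 1} : Set ℝ)ᶜ)})
        (fun i => pi_eval_null _ i _ hBad0))
      (measure_iUnion_null (s := fun i : Fin n => ⋃ j : Fin n,
        {ω : Fin n → (Fin d → ℝ) × ℝ | i ≠ j ∧ (ω i).1 = (ω j).1}) ?_))
    · simp only [hGood, Set.mem_compl_iff, Set.mem_setOf_eq, not_and_or, not_forall] at hω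
      rcases hω with hω | hω
      · obtain ⟨i, hi⟩ := hω
        refine Set.mem_union_left _ (Set.mem_iUnion.mpr ⟨i, ?_⟩)
        simp only [Set.mem_setOf_eq, Set.mem_union, Set.mem_prod, Set.mem_univ, and_true,
          true_and, Set.mem_compl_iff, Set.mem_insert_iff, Set.mem_singleton_iff]
        tauto
      · obtain ⟨i, hi⟩ := hω
        push_neg at hi
        obtain ⟨j, hij, heq⟩ := hi
        exact Set.mem_union_right _ (Set.mem_iUnion.mpr ⟨i, Set.mem_iUnion.mpr ⟨j, hij, heq⟩⟩)
    · intro i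
      refine measure_iUnion_null fun j => ?_
      by_cases hij : i = j
      · subst hij
        refine measure_mono_null (fun ω hω => absurd rfl hω.1) (measure_empty)
      · refine measure_mono_null (fun ω hω => hω.2) ?_
        refine pi_pair_null (μ.prod m) Prod.fst measurable_fst (fun a => ?_) hij
        have : {b : (Fin d → ℝ) × ℝ | b.1 = a} = ({a} ×ˢ Set.univ) := by
          ext b
          simp only [Set.mem_setOf_eq, Set.mem_prod, Set.mem_singleton_iff, Set.mem_univ,
            and_true]
        rw [this, Measure.prod_prod]
        have hsing : μ ({a} : Set (Fin d → ℝ)) = 0 := by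
          apply hac
          have : ({a} : Set (Fin d → ℝ)) = Set.pi Set.univ (fun j => {a j}) := by
            ext x; simp [funext_iff, Set.mem_pi]
          rw [this, volume_pi_pi]
          exact Finset.prod_eq_zero (Finset.mem_univ ⟨0, hd⟩) Real.volume_singleton
        rw [hsing, zero_mul]
  -- elementary bounds
  have hn0 : (0:ℝ) < (n:ℝ) := by exact_mod_cast hn
  have hinv1 : (n:ℝ)⁻¹ ≤ 1 := by
    have h1 : (1:ℝ) ≤ (n:ℝ) := by exact_mod_cast hn
    have h2 : (0:ℝ) < (n:ℝ)⁻¹ := by positivity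
    nlinarith [inv_mul_cancel₀ (ne_of_gt hn0)]
  have hterm : ∀ (σ t : ℝ), (σ = -1 ∨ σ = 1) → t ∈ Set.Icc (-1:ℝ) 1 → σ * t ≤ 1 := by
    rintro σ t (rfl | rfl) ⟨h1, h2⟩ <;> nlinarith
  have hsum_ub : ∀ ω : Fin n → (Fin d → ℝ) × ℝ, (∀ i, (ω i).2 = -1 ∨ (ω i).2 = 1) →
      ∀ g : (Fin d → ℝ) → ℝ, (∀ x, g x ∈ Set.Icc (-1:ℝ) 1) →
      (n : ℝ)⁻¹ * ∑ i, (ω i).2 * g (ω i).1 ≤ 1 := by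
    intro ω hσ g hg
    have hsum : ∑ i, (ω i).2 * g (ω i).1 ≤ (n:ℝ) := by
      calc ∑ i, (ω i).2 * g (ω i).1 ≤ ∑ _i : Fin n, (1:ℝ) :=
            Finset.sum_le_sum fun i _ => hterm _ _ (hσ i) (hg _)
        _ = (n:ℝ) := by simp
    calc (n : ℝ)⁻¹ * ∑ i, (ω i).2 * g (ω i).1 ≤ (n:ℝ)⁻¹ * (n:ℝ) :=
          mul_le_mul_of_nonneg_left hsum (by positivity)
      _ = 1 := inv_mul_cancel₀ (ne_of_gt hn0)
  have hGoodae : ∀ᵐ ω ∂ν, ω ∈ Good := by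
    rw [ae_iff]
    exact hGoodnull
  set Fall : Set ((Fin d → ℝ) → ℝ) :=
    {g | (∃ K, IsTree K g) ∧ ∀ x, g x ∈ Set.Icc (-1 : ℝ) 1} with hFall
  have hpred1 : rademacher μ n {g | g ∈ Fall ∧ g x₀ = f x₀} = 1 := by
    rw [rademacher]
    have hae : (fun ω : Fin n → (Fin d → ℝ) × ℝ => sSup ((fun g =>
        (n : ℝ)⁻¹ * ∑ i, (ω i).2 * g (ω i).1) '' {g | g ∈ Fall ∧ g x₀ = f x₀}))
        =ᵐ[sampleMeasure μ n] (fun _ => (1:ℝ)) := by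
      filter_upwards [hGoodae] with ω hω
      obtain ⟨hco, hdist⟩ := hω
      have hub : ∀ v ∈ (fun g => (n : ℝ)⁻¹ * ∑ i, (ω i).2 * g (ω i).1) ''
          {g | g ∈ Fall ∧ g x₀ = f x₀}, v ≤ 1 := by
        rintro v ⟨g, ⟨hgF, _⟩, rfl⟩
        exact hsum_ub ω (fun i => (hco i).2) g hgF.2
      -- construct the interpolating tree
      set pts : Finset (Fin d → ℝ) :=
        insert x₀ (Finset.image (fun i => (ω i).1) Finset.univ) with hpts
      set v : (Fin d → ℝ) → ℝ := fun x => if x = x₀ then f x₀ else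
        if h : ∃ i, (ω i).1 = x then (ω h.choose).2 else 0 with hv
      obtain ⟨K, g, hgT, hgv, hgr⟩ := isTree_interpolate pts v
      have hgx₀ : g x₀ = f x₀ := by
        rw [hgv x₀ (Finset.mem_insert_self _ _), hv]
        simp
      have hvxi : ∀ i : Fin n, v (ω i).1 = (ω i).2 := by
        intro i
        have hne : (ω i).1 ≠ x₀ := (hco i).1.1
        have hex : ∃ i', (ω i').1 = (ω i).1 := ⟨i, rfl⟩
        have hch : hex.choose = i := by
          by_contra hcontra
          exact (hdist _ _ hcontra) hex.choose_spec
        rw [hv]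
        simp only [if_neg hne, dif_pos hex, hch]
      have hgxi : ∀ i : Fin n, g (ω i).1 = (ω i).2 := by
        intro i
        have hmem : (ω i).1 ∈ pts :=
          Finset.mem_insert_of_mem (Finset.mem_image_of_mem _ (Finset.mem_univ i))
        rw [hgv _ hmem, hvxi i]
      have hgIcc : ∀ x, g x ∈ Set.Icc (-1:ℝ) 1 := by
        intro x
        rcases hgr x with h0 | ⟨y, hy, hvy⟩
        · rw [h0]; constructor <;> norm_num
        · rw [hvy]
          rcases Finset.mem_insert.mp hy with rfl | hy'
          · rw [hv]; simp only [if_pos rfl]; exact hf.2 y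
          · obtain ⟨i, _, rfl⟩ := Finset.mem_image.mp hy'
            rw [hvxi i]
            rcases (hco i).2 with h | h <;> rw [h] <;> constructor <;> norm_num
      have hval1 : (n:ℝ)⁻¹ * ∑ i, (ω i).2 * g (ω i).1 = 1 := by
        have hterm1 : ∀ i : Fin n, (ω i).2 * g (ω i).1 = 1 := by
          intro i; rw [hgxi i]; rcases (hco i).2 with h | h <;> rw [h] <;> norm_num
        rw [Finset.sum_congr rfl fun i _ => hterm1 i, Finset.sum_const, Finset.card_univ,
          Fintype.card_fin, nsmul_eq_mul, mul_one]
        exact inv_mul_cancel₀ (ne_of_gt hn0)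
      apply le_antisymm
      · exact Real.sSup_le hub zero_le_one
      · refine le_csSup ⟨1, fun w hw => hub w hw⟩ ?_
        exact ⟨g, ⟨⟨⟨K, hgT⟩, hgIcc⟩, hgx₀⟩, hval1⟩
    rw [integral_congr_ae hae, integral_const, ← hν]
    simp
  rw [show {g | g ∈ Fall ∧ g x₀ = f x₀ ∧ precision μ XR g x₀ = 1}
      = {g | g ∈ Fall ∧ (g x₀ = f x₀ ∧ precision μ XR g x₀ = 1)} from rfl, hpred1]
  set Fe : Set ((Fin d → ℝ) → ℝ) :=
    {g | g ∈ Fall ∧ (g x₀ = f x₀ ∧ precision μ XR g x₀ = 1)} with hFe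
  set he : (Fin n → (Fin d → ℝ) × ℝ) → ℝ := fun ω =>
    sSup ((fun g => (n : ℝ)⁻¹ * ∑ i, (ω i).2 * g (ω i).1) '' Fe) with hhe
  have hgoal : rademacher μ n Fe = ∫ ω, he ω ∂ν := rfl
  rw [hgoal]
  -- sign forcing bound
  set τ : ℝ := if 0 ≤ Real.sign (f x₀) then (-1:ℝ) else 1 with hτ
  have hsign : ∀ g ∈ Fe, ∀ x, x ∈ U → x ∈ G → τ * g x ≤ 0 := by
    intro g hg x hxU hxG
    obtain ⟨⟨⟨K, hgT⟩, hgIcc⟩, hgx₀, hgprec⟩ := hg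
    have hs : Real.sign (g x) = Real.sign (f x₀) := by
      rw [sign_forcing μ XR hXRm hcov U hUopen hUXR G hGthick g K hgT x₀ hgprec x hxU hxG,
        hgx₀]
    rcases lt_trichotomy (g x) 0 with h | h | h
    · have hsgn : Real.sign (f x₀) = -1 := by rw [← hs, Real.sign_of_neg h]
      have hτ1 : τ = 1 := by rw [hτ, if_neg (by rw [hsgn]; norm_num)]
      rw [hτ1, one_mul]; linarith
    · rw [h, mul_zero]
    · have hsgn : Real.sign (f x₀) = 1 := by rw [← hs, Real.sign_of_pos h]
      have hτ1 : τ = -1 := by rw [hτ, if_pos (by rw [hsgn]; norm_num)]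
      rw [hτ1]; linarith
  set i₀ : Fin n := ⟨0, hn⟩ with hi₀
  set E₀ : Set (Fin n → (Fin d → ℝ) × ℝ) := {ω | (ω i₀).1 ∈ U ∧ (ω i₀).2 = τ} with hE₀
  have hmτ : m {τ} = 2⁻¹ := by
    have hττ : τ = -1 ∨ τ = 1 := by
      rw [hτ]; by_cases h : 0 ≤ Real.sign (f x₀) <;> simp [h]
    rcases hττ with h | h <;>
    · rw [h, hm]
      simp only [Measure.add_apply, Measure.smul_apply, smul_eq_mul]
      rw [Measure.dirac_apply, Measure.dirac_apply]
      simp [Set.indicator]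
      norm_num
  have hE₀pos : 0 < ν E₀ := by
    have hset : E₀ = {ω : Fin n → (Fin d → ℝ) × ℝ | ω i₀ ∈ (U ×ˢ ({τ} : Set ℝ))} := by
      ext ω
      simp only [hE₀, Set.mem_setOf_eq, Set.mem_prod, Set.mem_singleton_iff]
    rw [hset, hνpi, pi_eval_measure, Measure.prod_prod, hmτ]
    exact ENNReal.mul_pos hμU.ne' (by norm_num)
  have hle1 : ∀ ω ∈ Good, he ω ≤ 1 := by
    intro ω hω
    refine Real.sSup_le ?_ zero_le_one
    rintro w ⟨g, hgFe, rfl⟩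
    exact hsum_ub ω (fun i => (hω.1 i).2) g hgFe.1.2
  have hebound : ∀ ω ∈ Good, ω ∈ E₀ → he ω ≤ 1 - (n:ℝ)⁻¹ := by
    intro ω hω hωE
    obtain ⟨hco, hdist⟩ := hω
    refine Real.sSup_le ?_ (by linarith)
    rintro w ⟨g, hgFe, rfl⟩
    have hgIcc := hgFe.1.2
    have hterm0 : (ω i₀).2 * g (ω i₀).1 ≤ 0 := by
      rw [hωE.2]
      exact hsign g hgFe (ω i₀).1 hωE.1 (hco i₀).1.2.2
    have hsum : ∑ i, (ω i).2 * g (ω i).1 ≤ (n:ℝ) - 1 := by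
      rw [← Finset.add_sum_erase _ _ (Finset.mem_univ i₀)]
      have hrest : ∑ i ∈ Finset.univ.erase i₀, (ω i).2 * g (ω i).1 ≤ (n:ℝ) - 1 := by
        calc ∑ i ∈ Finset.univ.erase i₀, (ω i).2 * g (ω i).1
            ≤ ∑ _i ∈ Finset.univ.erase i₀, (1:ℝ) :=
              Finset.sum_le_sum fun i _ => hterm _ _ (hco i).2 (hgIcc _)
          _ = ((Finset.univ.erase i₀).card : ℝ) := by simp
          _ = (n:ℝ) - 1 := by
              rw [Finset.card_erase_of_mem (Finset.mem_univ _), Finset.card_univ,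
                Fintype.card_fin, Nat.cast_sub hn, Nat.cast_one]
      linarith
    calc (n:ℝ)⁻¹ * ∑ i, (ω i).2 * g (ω i).1 ≤ (n:ℝ)⁻¹ * ((n:ℝ) - 1) :=
          mul_le_mul_of_nonneg_left hsum (by positivity)
      _ = 1 - (n:ℝ)⁻¹ := by field_simp
  by_cases hint : Integrable he ν
  · have haele : ∀ᵐ ω ∂ν, he ω ≤ 1 := by
      filter_upwards [hGoodae] with ω h using hle1 ω h
    have hq : Integrable (fun ω => 1 - he ω) ν := (integrable_const 1).sub hint
    have hqnn : 0 ≤ᵐ[ν] fun ω => 1 - he ω := by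
      filter_upwards [haele] with ω h
      simp only [Pi.zero_apply]
      linarith
    have hEGood : 0 < ν (E₀ ∩ Good) := by
      have h1 : ν E₀ ≤ ν (E₀ ∩ Good) + ν (E₀ \ Good) := measure_le_inter_add_diff _ _ _
      have h2 : ν (E₀ \ Good) = 0 :=
        measure_mono_null (fun ω hω => hω.2) hGoodnull
      rw [h2, add_zero] at h1
      exact lt_of_lt_of_le hE₀pos h1
    have hqpos : 0 < ∫ ω, (1 - he ω) ∂ν := by
      rw [integral_pos_iff_support_of_nonneg_ae hqnn hq]
      refine lt_of_lt_of_le hEGood (measure_mono ?_)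
      rintro ω ⟨hE, hG⟩
      have hb := hebound ω hG hE
      have hpos : (0:ℝ) < (n:ℝ)⁻¹ := by positivity
      simp only [Function.mem_support]
      intro h0
      rw [sub_eq_zero] at h0
      rw [← h0] at hb
      linarith
    have hsplit : ∫ ω, he ω ∂ν = 1 - ∫ ω, (1 - he ω) ∂ν := by
      have : ∫ ω, (1 - he ω) ∂ν = ∫ _ω, (1:ℝ) ∂ν - ∫ ω, he ω ∂ν :=
        integral_sub (integrable_const 1) hint
      rw [this, integral_const]
      simp
    rw [hsplit]
    linarith
  · rw [integral_undef hint]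
    norm_num
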